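/- (Case 8 descent) Let $p \ge 5$ be a prime and let $x, r, y$ be integers with $\gcd(x,r) = 1$, $r \ge 1$, satisfying $(x-3r)^3+(x-2r)^3+(x-r)^3+x^3+(x+r)^3+(x+2r)^3+(x+3r)^3 = y^p$. Suppose $7 \mid x$, $2 \nmid x$ and $3 \mid x$. Then there exist integers $w_1, w_2$ with $x = 3^{p-1} \cdot 7^{p-1} w_1^p$, $x^2 + 12r^2 = 3 w_2^p$, and consequently $w_2^p - 3^{2p-3} \cdot 7^{2p-2} w_1^{2p} = 4 r^2$. -/

import Mathlib

theorem case8_descent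
    (p : ℕ) (hp : p.Prime) (hp5 : 5 ≤ p)
    (x r y : ℤ) (hgcd : Int.gcd x r = 1) (hr : 1 ≤ r)
    (heq : (x - 3 * r) ^ 3 + (x - 2 * r) ^ 3 + (x - r) ^ 3 + x ^ 3 +
      (x + r) ^ 3 + (x + 2 * r) ^ 3 + (x + 3 * r) ^ 3 = y ^ p)
    (h7 : (7 : ℤ) ∣ x) (h2 : ¬ (2 : ℤ) ∣ x) (h3 : (3 : ℤ) ∣ x) :
    ∃ w₁ w₂ : ℤ, x = 3 ^ (p - 1) * 7 ^ (p - 1) * w₁ ^ p ∧ x ^ 2 + 12 * r ^ 2 = 3 * w₂ ^ p ∧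
      w₂ ^ p - 3 ^ (2 * p - 3) * 7 ^ (2 * p - 2) * w₁ ^ (2 * p) = 4 * r ^ 2 := by
  have hodd : Odd p := hp.odd_of_ne_two (by omega)
  have hp3 : Prime (3:ℤ) := Int.prime_three
  have hp7 : Prime (7:ℤ) := by norm_num
  have hp2 : Prime (2:ℤ) := Int.prime_two
  -- r not divisible by 3 or 7
  have h3r : ¬ (3:ℤ) ∣ r := by
    intro h
    have : (3:ℤ) ∣ (Int.gcd x r : ℤ) := Int.dvd_coe_gcd h3 h
    rw [hgcd] at this
    norm_num at this
  have h7r : ¬ (7:ℤ) ∣ r := by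
    intro h
    have : (7:ℤ) ∣ (Int.gcd x r : ℤ) := Int.dvd_coe_gcd h7 h
    rw [hgcd] at this
    norm_num at this
  -- define m
  obtain ⟨x₀, hx0⟩ := h3
  have hm : ∃ m : ℤ, x ^ 2 + 12 * r ^ 2 = 3 * m := ⟨3 * x₀ ^ 2 + 4 * r ^ 2, by rw [hx0]; ring⟩
  obtain ⟨m, hm⟩ := hm
  have h3m : ¬ (3:ℤ) ∣ m := by
    intro ⟨k, hk⟩
    have h4 : (3:ℤ) ∣ 4 * r ^ 2 := ⟨k - x₀ ^ 2, by rw [hx0, hk] at hm; linarith⟩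
    rcases hp3.dvd_mul.mp h4 with h | h
    · norm_num at h
    · exact h3r (hp3.dvd_of_dvd_pow h)
  have h7m : ¬ (7:ℤ) ∣ m := by
    intro ⟨k, hk⟩
    obtain ⟨x₁, hx1⟩ := h7
    have : (7:ℤ) ∣ r ^ 2 := by
      have : (12:ℤ) * r ^ 2 = 3 * (7 * k) - (7 * x₁) ^ 2 := by rw [← hk, ← hx1, ← hm]; ring
      have h12 : (7:ℤ) ∣ 12 * r ^ 2 := ⟨3 * k - 7 * x₁ ^ 2, by linarith⟩
      rcases (hp7.dvd_mul.mp h12) with h | h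
      · norm_num at h
      · exact h
    exact h7r (hp7.dvd_of_dvd_pow this)
  -- x coprime to m
  have hxm : IsCoprime x m := by
    rw [Int.isCoprime_iff_gcd_eq_one]
    by_contra hne
    have hx0' : x ≠ 0 := by rintro rfl; exact h2 ⟨0, by ring⟩
    have hg0 : Int.gcd x m ≠ 0 := by
      simp [Int.gcd_eq_zero_iff, hx0']
    obtain ⟨q, hq, hqd⟩ := Nat.exists_prime_and_dvd hne
    have hqZ : Prime (q:ℤ) := (Nat.prime_iff_prime_int.mp hq)
    have hqx : (q:ℤ) ∣ x := dvd_trans (Int.natCast_dvd_natCast.mpr hqd) (Int.gcd_dvd_left x m)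
    have hqm : (q:ℤ) ∣ m := dvd_trans (Int.natCast_dvd_natCast.mpr hqd) (Int.gcd_dvd_right x m)
    have hq12 : (q:ℤ) ∣ 12 * r ^ 2 := by
      obtain ⟨u, hu⟩ := hqx
      obtain ⟨v, hv⟩ := hqm
      exact ⟨3 * v - q * u ^ 2, by rw [show (12:ℤ) * r ^ 2 = 3 * m - x ^ 2 by linarith [hm], hu, hv]; ring⟩
    rcases hqZ.dvd_mul.mp hq12 with h | h
    · -- q ∣ 12 = 2*2*3
      have : (q:ℤ) ∣ 2 * (2 * 3) := by norm_num at h ⊢; exact_mod_cast h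
      rcases hqZ.dvd_mul.mp this with h' | h'
      · have h2q : (2:ℤ) ∣ (q:ℤ) := (hqZ.associated_of_dvd hp2 h').symm.dvd
        exact h2 (h2q.trans hqx)
      · rcases hqZ.dvd_mul.mp h' with h'' | h''
        · have h2q : (2:ℤ) ∣ (q:ℤ) := (hqZ.associated_of_dvd hp2 h'').symm.dvd
          exact h2 (h2q.trans hqx)
        · have h3q : (3:ℤ) ∣ (q:ℤ) := (hqZ.associated_of_dvd hp3 h'').symm.dvd
          exact h3m (h3q.trans hqm)
    · have hqr : (q:ℤ) ∣ r := hqZ.dvd_of_dvd_pow h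
      have : (q:ℤ) ∣ (Int.gcd x r : ℤ) := Int.dvd_coe_gcd hqx hqr
      rw [hgcd] at this
      exact hqZ.not_isUnit (isUnit_of_dvd_one this)
  -- coprimality of 21x and m
  have hcop : IsCoprime (21 * x) m := by
    have c3 : IsCoprime (3:ℤ) m := (hp3.coprime_iff_not_dvd).mpr h3m
    have c7 : IsCoprime (7:ℤ) m := (hp7.coprime_iff_not_dvd).mpr h7m
    have : IsCoprime ((3 * 7) * x) m := (c3.mul_left c7).mul_left hxm
    have e : (21:ℤ) = 3 * 7 := by norm_num
    rw [e]
    exact this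
  -- key equation
  have hy : (21 * x) * m = y ^ p := by linear_combination heq - 7 * x * hm
  obtain ⟨⟨a, ha⟩, ⟨w₂, hw2⟩⟩ := Int.eq_pow_of_mul_eq_pow_odd hcop hodd hy
  -- 3 and 7 divide a
  have h3a : (3:ℤ) ∣ a := hp3.dvd_of_dvd_pow (n := p) (by rw [← ha]; exact ⟨7 * x, by ring⟩)
  have h7a : (7:ℤ) ∣ a := hp7.dvd_of_dvd_pow (n := p) (by rw [← ha]; exact ⟨3 * x, by ring⟩)
  have h21a : (21:ℤ) ∣ a := by
    have c37 : IsCoprime (3:ℤ) 7 := by norm_num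
    have := c37.mul_dvd h3a h7a
    norm_num at this ⊢
    exact this
  obtain ⟨w₁, hw1⟩ := h21a
  obtain ⟨n, rfl⟩ : ∃ n, p = n + 5 := ⟨p - 5, by omega⟩
  have hx : x = 3 ^ (n + 4) * 7 ^ (n + 4) * w₁ ^ (n + 5) := by
    have h21 : (21:ℤ) ≠ 0 := by norm_num
    apply mul_left_cancel₀ h21
    rw [ha, hw1, ← mul_pow, show ((3:ℤ) * 7) = 21 by norm_num]
    ring
  refine ⟨w₁, w₂, ?_, ?_, ?_⟩
  · simpa using hx
  · rw [hm, hw2]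
  · have e1 : 2 * (n + 5) - 3 = 2 * n + 7 := by omega
    have e2 : 2 * (n + 5) - 2 = 2 * n + 8 := by omega
    have e3 : 2 * (n + 5) = 2 * n + 10 := by omega
    rw [e1, e2, e3]
    have h3ne : (3:ℤ) ≠ 0 := by norm_num
    apply mul_left_cancel₀ h3ne
    have hxm2 : x ^ 2 + 12 * r ^ 2 = 3 * w₂ ^ (n + 5) := by rw [hm, hw2]
    linear_combination -hxm2 + (x + 3 ^ (n + 4) * 7 ^ (n + 4) * w₁ ^ (n + 5)) * hx
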